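/- Let G be a locally compact group and H a compact open subgroup of G. A function f : G → ℂ belongs to P(G) if and only if there exist finitely many functions f₁, …, fₘ, g₁, …, gₘ, f'₁, …, f'ₙ, g'₁, …, g'ₙ ∈ C₀(G) such that for all x, y ∈ G: (i) f(xy)·χ_H(y) = Σ_{i=1}^m f_i(x)·g_i(y), and (ii) f(y)·χ_H(xy) = Σ_{j=1}^n f'_j(x)·g'_j(y), where χ_H is the indicator function of H. -/

import Mathlib

open Filter Topology

/-- The space `P(G)` of polynomial functions on `G`: all continuous compactly supported
`f : G → ℂ` such that for some compact open subgroup `K` of `G` there are finitely many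
`fᵢ ∈ C_c(G)` and continuous `φᵢ : K → ℂ` with `f (x * k) = ∑ i, fᵢ x * φᵢ k` for all
`x ∈ G`, `k ∈ K`. -/
def PolyFun (G : Type*) [Group G] [TopologicalSpace G] : Set (G → ℂ) :=
  {f | Continuous f ∧ HasCompactSupport f ∧
    ∃ K : Subgroup G, IsCompact (K : Set G) ∧ IsOpen (K : Set G) ∧
      ∃ (n : ℕ) (fi : Fin n → G → ℂ) (φ : Fin n → ↥K → ℂ),
        (∀ i, Continuous (fi i) ∧ HasCompactSupport (fi i)) ∧
        (∀ i, Continuous (φ i)) ∧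
        ∀ (x : G) (k : ↥K), f (x * (k : G)) = ∑ i, fi i x * φ i k}

open scoped Pointwise


section Helpers
variable {G : Type*} [Group G] [TopologicalSpace G] [IsTopologicalGroup G] [T2Space G]

omit [Group G] [IsTopologicalGroup G] [T2Space G] in
lemma indicator_cont' {s : Set G} [∀ x, Decidable (x ∈ s)] (h : IsClopen s) :
    Continuous (fun x => if x ∈ s then (1:ℂ) else 0) := by
  apply Continuous.if ?_ continuous_const continuous_const
  intro a ha
  rw [show {x | x ∈ s} = s from rfl, isClopen_iff_frontier_eq_empty.mp h] at ha
  exact absurd ha (Set.notMem_empty a)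

omit [IsTopologicalGroup G] [T2Space G] in
lemma ext_cont {K : Subgroup G} [∀ g, Decidable (g ∈ K)] (hKo : IsOpen (K : Set G))
    (hKcl : IsClosed (K : Set G)) (φ : ↥K → ℂ) (hφ : Continuous φ) :
    Continuous (fun g => if h : g ∈ K then φ ⟨g, h⟩ else 0) := by
  rw [continuous_iff_continuousAt]
  intro g
  by_cases hg : g ∈ K
  · have h1 : ContinuousOn (fun g => if h : g ∈ K then φ ⟨g, h⟩ else 0) (K : Set G) := by
      rw [continuousOn_iff_continuous_restrict]
      have : (K : Set G).restrict (fun g => if h : g ∈ K then φ ⟨g, h⟩ else 0) = φ := by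
        funext k
        simp [Set.restrict, k.2]
      exact (congrArg Continuous this).mpr hφ
    exact h1.continuousAt (hKo.mem_nhds hg)
  · have h0 : (fun g => if h : g ∈ K then φ ⟨g, h⟩ else 0) =ᶠ[𝓝 g] (fun _ => (0:ℂ)) := by
      filter_upwards [hKcl.isOpen_compl.mem_nhds hg] with x hx
      exact dif_neg hx
    exact ContinuousAt.congr continuousAt_const h0.symm

omit [TopologicalSpace G] [IsTopologicalGroup G] [T2Space G] in
lemma mem_out_smul {K' : Subgroup G} (q : G ⧸ K') (y : G) :
    y ∈ q.out • (K' : Set G) ↔ (QuotientGroup.mk y : G ⧸ K') = q := by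
  rw [mem_leftCoset_iff, SetLike.mem_coe, ← QuotientGroup.eq, QuotientGroup.out_eq']
  exact eq_comm

end Helpers


open scoped Classical in
private theorem polyFun_aux_forward
    {G : Type*} [Group G] [TopologicalSpace G] [IsTopologicalGroup G]
    [LocallyCompactSpace G] [T2Space G]
    (H : Subgroup G) (hHc : IsCompact (H : Set G)) (hHo : IsOpen (H : Set G))
    (f : G → ℂ) (hf : f ∈ PolyFun G) :
      ∃ (m n : ℕ) (fi gi : Fin m → G → ℂ) (fj gj : Fin n → G → ℂ),
        (∀ i, Continuous (fi i) ∧ Tendsto (fi i) (cocompact G) (𝓝 0)) ∧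
        (∀ i, Continuous (gi i) ∧ Tendsto (gi i) (cocompact G) (𝓝 0)) ∧
        (∀ j, Continuous (fj j) ∧ Tendsto (fj j) (cocompact G) (𝓝 0)) ∧
        (∀ j, Continuous (gj j) ∧ Tendsto (gj j) (cocompact G) (𝓝 0)) ∧
        (∀ x y : G,
          f (x * y) * (if y ∈ H then (1 : ℂ) else 0) = ∑ i, fi i x * gi i y) ∧
        (∀ x y : G,
          f y * (if x * y ∈ H then (1 : ℂ) else 0) = ∑ j, fj j x * gj j y) := by
  classical
  obtain ⟨hfc, hfs, K, hKc, hKo, n, fi, φ, hfi, hφ, hsum⟩ := hf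
  -- ## Setup for identity (i)
  set K' : Subgroup G := K ⊓ H with hK'def
  have hK'set : (K' : Set G) = (K : Set G) ∩ (H : Set G) := rfl
  have hK'c : IsCompact (K' : Set G) := by rw [hK'set]; exact hKc.inter_right hHc.isClosed
  have hK'o : IsOpen (K' : Set G) := by rw [hK'set]; exact hKo.inter hHo
  obtain ⟨t, ht⟩ := hHc.elim_finite_subcover (fun g : G => g • (K' : Set G))
    (fun g => hK'o.smul g)
    (fun x _ => Set.mem_iUnion.2 ⟨x, (mem_leftCoset_iff x).2 (by simpa using K'.one_mem)⟩)
  set Q : Finset (G ⧸ K') := (t.image (QuotientGroup.mk : G → G ⧸ K')).filter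
    (fun q => q.out ∈ H) with hQdef
  have hK'H : ∀ g : G, g ∈ K' → g ∈ H := fun g hg => hg.2
  have hQH : ∀ y : G, (QuotientGroup.mk y : G ⧸ K') ∈ Q ↔ y ∈ H := by
    intro y
    constructor
    · intro hy
      have h2 := (Finset.mem_filter.1 hy).2
      have h3 : y ∈ ((QuotientGroup.mk y : G ⧸ K')).out • (K' : Set G) :=
        (mem_out_smul _ _).2 rfl
      have hk := (mem_leftCoset_iff _).1 h3
      have := H.mul_mem h2 (hK'H _ hk)
      simpa using this
    · intro hy
      obtain ⟨c, hct, hyc⟩ := Set.mem_iUnion₂.1 (ht hy)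
      have hmk : (QuotientGroup.mk c : G ⧸ K') = QuotientGroup.mk y :=
        QuotientGroup.eq.2 ((mem_leftCoset_iff c).1 hyc)
      refine Finset.mem_filter.2 ⟨Finset.mem_image.2 ⟨c, hct, hmk⟩, ?_⟩
      -- (mk y).out ∈ H
      have hh : y⁻¹ * ((QuotientGroup.mk y : G ⧸ K')).out ∈ K' :=
        QuotientGroup.eq.1 (QuotientGroup.out_eq' (QuotientGroup.mk y : G ⧸ K')).symm
      have := H.mul_mem hy (hK'H _ hh)
      simpa using this
  set Φ : Fin n → G → ℂ := fun i g => if h : g ∈ K then φ i ⟨g, h⟩ else 0 with hΦdef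
  have hΦc : ∀ i, Continuous (Φ i) := fun i => ext_cont hKo hKc.isClosed (φ i) (hφ i)
  have hΦeq : ∀ i g (hg : g ∈ K), Φ i g = φ i ⟨g, hg⟩ := fun i g hg => dif_pos hg
  set m : ℕ := Fintype.card (↥Q × Fin n) with hmdef
  set e : Fin m ≃ ↥Q × Fin n := (Fintype.equivFin (↥Q × Fin n)).symm with hedef
  set F : Fin m → G → ℂ := fun a x => fi (e a).2 (x * ((e a).1 : G ⧸ K').out) with hFdef
  set Gg : Fin m → G → ℂ := fun a y =>
    (if y ∈ ((e a).1 : G ⧸ K').out • (K' : Set G) then (1:ℂ) else 0) *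
      Φ (e a).2 ((((e a).1 : G ⧸ K').out)⁻¹ * y) with hGgdef
  have hFprop : ∀ a, Continuous (F a) ∧ Tendsto (F a) (cocompact G) (𝓝 0) := by
    intro a
    have hc : Continuous (F a) := (hfi (e a).2).1.comp (continuous_mul_right _)
    have hs : HasCompactSupport (F a) :=
      (hfi (e a).2).2.comp_homeomorph (Homeomorph.mulRight (((e a).1 : G ⧸ K').out))
    exact ⟨hc, hs.is_zero_at_infty⟩
  have hGgprop : ∀ a, Continuous (Gg a) ∧ Tendsto (Gg a) (cocompact G) (𝓝 0) := by
    intro a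
    have hclopen : IsClopen (((e a).1 : G ⧸ K').out • (K' : Set G)) :=
      ⟨(hK'c.smul _).isClosed, hK'o.smul _⟩
    have hc : Continuous (Gg a) :=
      (indicator_cont' hclopen).mul ((hΦc (e a).2).comp (continuous_mul_left _))
    have hs : HasCompactSupport (Gg a) := by
      apply HasCompactSupport.intro (hK'c.smul (((e a).1 : G ⧸ K').out))
      intro y hy
      simp only [hGgdef, if_neg hy, zero_mul]
    exact ⟨hc, hs.is_zero_at_infty⟩
  have step : ∀ (x y : G) (q : G ⧸ K'),
      (∑ i : Fin n, fi i (x * q.out) *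
        ((if y ∈ q.out • (K' : Set G) then (1:ℂ) else 0) * Φ i (q.out⁻¹ * y)))
      = if (QuotientGroup.mk y : G ⧸ K') = q then f (x * y) else 0 := by
    intro x y q
    by_cases hy : y ∈ q.out • (K' : Set G)
    · rw [if_pos ((mem_out_smul q y).1 hy)]
      have hmem : q.out⁻¹ * y ∈ K' := (mem_leftCoset_iff _).1 hy
      have hmemK : q.out⁻¹ * y ∈ K := hmem.1
      have hq : f (x * q.out * (q.out⁻¹ * y)) =
          ∑ i, fi i (x * q.out) * φ i ⟨q.out⁻¹ * y, hmemK⟩ :=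
        hsum (x * q.out) ⟨q.out⁻¹ * y, hmemK⟩
      rw [show x * y = x * q.out * (q.out⁻¹ * y) by group, hq]
      refine Finset.sum_congr rfl fun i _ => ?_
      rw [if_pos hy, one_mul, hΦeq i _ hmemK]
    · rw [if_neg (fun h => hy ((mem_out_smul q y).2 h))]
      refine Finset.sum_eq_zero fun i _ => ?_
      rw [if_neg hy, zero_mul, mul_zero]
  have key : ∀ x y : G, f (x * y) * (if y ∈ H then (1:ℂ) else 0) = ∑ a, F a x * Gg a y := by
    intro x y
    have h1 : ∑ a, F a x * Gg a y = ∑ b : ↥Q × Fin n,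
        fi b.2 (x * ((b.1 : G ⧸ K')).out) *
          ((if y ∈ ((b.1 : G ⧸ K')).out • (K' : Set G) then (1:ℂ) else 0) *
            Φ b.2 ((((b.1 : G ⧸ K')).out)⁻¹ * y)) :=
      Fintype.sum_equiv e _ _ (fun a => rfl)
    rw [h1, Fintype.sum_prod_type]
    rw [Finset.sum_congr rfl (fun (q : ↥Q) _ => step x y (q : G ⧸ K'))]
    rw [Finset.sum_coe_sort Q
      (fun q => if (QuotientGroup.mk y : G ⧸ K') = q then f (x * y) else 0)]
    rw [Finset.sum_ite_eq Q (QuotientGroup.mk y : G ⧸ K') (fun _ => f (x * y))]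
    by_cases hy : y ∈ H
    · rw [if_pos ((hQH y).2 hy), if_pos hy, mul_one]
    · rw [if_neg (fun h => hy ((hQH y).1 h)), if_neg hy, mul_zero]
  -- ## identity (ii)
  have hts : IsCompact (tsupport f) := hfs
  obtain ⟨t₂, ht₂⟩ := hts.elim_finite_subcover (fun g : G => g • (H : Set G))
    (fun g => hHo.smul g)
    (fun x _ => Set.mem_iUnion.2 ⟨x, (mem_leftCoset_iff x).2 (by simpa using H.one_mem)⟩)
  set Q₂ : Finset (G ⧸ H) := t₂.image (QuotientGroup.mk : G → G ⧸ H) with hQ₂def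
  have hQ₂ : ∀ y : G, f y ≠ 0 → (QuotientGroup.mk y : G ⧸ H) ∈ Q₂ := by
    intro y hy
    have hmem : y ∈ tsupport f := subset_tsupport f hy
    obtain ⟨c, hct, hyc⟩ := Set.mem_iUnion₂.1 (ht₂ hmem)
    exact Finset.mem_image.2 ⟨c, hct, QuotientGroup.eq.2 ((mem_leftCoset_iff c).1 hyc)⟩
  set m₂ : ℕ := Fintype.card (↥Q₂) with hm₂def
  set e₂ : Fin m₂ ≃ ↥Q₂ := (Fintype.equivFin (↥Q₂)).symm with he₂def
  set F₂ : Fin m₂ → G → ℂ := fun a x =>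
    if x * ((e₂ a : G ⧸ H)).out ∈ H then (1:ℂ) else 0 with hF₂def
  set G₂ : Fin m₂ → G → ℂ := fun a y =>
    f y * (if (QuotientGroup.mk y : G ⧸ H) = (e₂ a : G ⧸ H) then (1:ℂ) else 0) with hG₂def
  have hHclopen : IsClopen (H : Set G) := ⟨hHc.isClosed, hHo⟩
  have hF₂prop : ∀ a, Continuous (F₂ a) ∧ Tendsto (F₂ a) (cocompact G) (𝓝 0) := by
    intro a
    have hc : Continuous (F₂ a) :=
      (indicator_cont' hHclopen).comp (continuous_mul_right ((e₂ a : G ⧸ H)).out)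
    have hs : HasCompactSupport (F₂ a) := by
      apply HasCompactSupport.intro
        (hHc.image (continuous_mul_right ((e₂ a : G ⧸ H)).out⁻¹))
      intro x hx
      refine if_neg fun hmem => hx ⟨x * ((e₂ a : G ⧸ H)).out, hmem, by group⟩
    exact ⟨hc, hs.is_zero_at_infty⟩
  have hG₂prop : ∀ a, Continuous (G₂ a) ∧ Tendsto (G₂ a) (cocompact G) (𝓝 0) := by
    intro a
    have hind : (fun y => if (QuotientGroup.mk y : G ⧸ H) = (e₂ a : G ⧸ H) then (1:ℂ) else 0)
        = (fun y => if y ∈ ((e₂ a : G ⧸ H)).out • (H : Set G) then (1:ℂ) else 0) := by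
      funext y
      simp only [← mem_out_smul ((e₂ a : G ⧸ H)) y]
    have hc : Continuous (G₂ a) := by
      have h3 : Continuous
          (fun y => if y ∈ ((e₂ a : G ⧸ H)).out • (H : Set G) then (1:ℂ) else 0) :=
        indicator_cont' ⟨(hHc.smul _).isClosed, hHo.smul _⟩
      rw [← hind] at h3
      exact hfc.mul h3
    have hs : HasCompactSupport (G₂ a) := hfs.mul_right
    exact ⟨hc, hs.is_zero_at_infty⟩
  have key2 : ∀ x y : G, f y * (if x * y ∈ H then (1:ℂ) else 0) = ∑ a, F₂ a x * G₂ a y := by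
    intro x y
    have h1 : ∑ a, F₂ a x * G₂ a y = ∑ q : ↥Q₂,
        (if x * ((q : G ⧸ H)).out ∈ H then (1:ℂ) else 0) *
          (f y * (if (QuotientGroup.mk y : G ⧸ H) = (q : G ⧸ H) then (1:ℂ) else 0)) :=
      Fintype.sum_equiv e₂ _ _ (fun a => rfl)
    rw [h1]
    have h2 : ∀ q : ↥Q₂,
        (if x * ((q : G ⧸ H)).out ∈ H then (1:ℂ) else 0) *
          (f y * (if (QuotientGroup.mk y : G ⧸ H) = (q : G ⧸ H) then (1:ℂ) else 0))
        = if (QuotientGroup.mk y : G ⧸ H) = (q : G ⧸ H) then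
            (if x * ((q : G ⧸ H)).out ∈ H then (1:ℂ) else 0) * f y else 0 := by
      intro q
      by_cases h : (QuotientGroup.mk y : G ⧸ H) = (q : G ⧸ H) <;> simp [h] <;> ring
    rw [Finset.sum_congr rfl (fun q _ => h2 q)]
    rw [Finset.sum_coe_sort Q₂ (fun q => if (QuotientGroup.mk y : G ⧸ H) = q then
        (if x * q.out ∈ H then (1:ℂ) else 0) * f y else 0)]
    rw [Finset.sum_ite_eq Q₂ (QuotientGroup.mk y : G ⧸ H)
        (fun q => (if x * q.out ∈ H then (1:ℂ) else 0) * f y)]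
    by_cases hfy : f y = 0
    · simp [hfy]
    · rw [if_pos (hQ₂ y hfy)]
      have hh : y⁻¹ * ((QuotientGroup.mk y : G ⧸ H)).out ∈ H :=
        QuotientGroup.eq.1 (QuotientGroup.out_eq' (QuotientGroup.mk y : G ⧸ H)).symm
      have hiff : x * ((QuotientGroup.mk y : G ⧸ H)).out ∈ H ↔ x * y ∈ H := by
        rw [show x * ((QuotientGroup.mk y : G ⧸ H)).out
            = (x * y) * (y⁻¹ * ((QuotientGroup.mk y : G ⧸ H)).out) by group]
        exact mul_mem_cancel_right hh
      by_cases hxy : x * y ∈ H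
      · rw [if_pos hxy, if_pos (hiff.2 hxy), one_mul, mul_one]
      · rw [if_neg hxy, if_neg (fun h => hxy (hiff.1 h)), mul_zero, zero_mul]
  exact ⟨m, m₂, F, Gg, F₂, G₂, hFprop, hGgprop, hF₂prop, hG₂prop, key, key2⟩

open scoped Classical in
private theorem polyFun_aux_rev
    {G : Type*} [Group G] [TopologicalSpace G] [IsTopologicalGroup G]
    [LocallyCompactSpace G] [T2Space G]
    (H : Subgroup G) (hHc : IsCompact (H : Set G)) (hHo : IsOpen (H : Set G))
    (f : G → ℂ)
    (hyp : ∃ (m n : ℕ) (fi gi : Fin m → G → ℂ) (fj gj : Fin n → G → ℂ),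
        (∀ i, Continuous (fi i) ∧ Tendsto (fi i) (cocompact G) (𝓝 0)) ∧
        (∀ i, Continuous (gi i) ∧ Tendsto (gi i) (cocompact G) (𝓝 0)) ∧
        (∀ j, Continuous (fj j) ∧ Tendsto (fj j) (cocompact G) (𝓝 0)) ∧
        (∀ j, Continuous (gj j) ∧ Tendsto (gj j) (cocompact G) (𝓝 0)) ∧
        (∀ x y : G,
          f (x * y) * (if y ∈ H then (1 : ℂ) else 0) = ∑ i, fi i x * gi i y) ∧
        (∀ x y : G,
          f y * (if x * y ∈ H then (1 : ℂ) else 0) = ∑ j, fj j x * gj j y)) :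
    f ∈ PolyFun G := by
  classical
  obtain ⟨m, n, fi, gi, fj, gj, hfi, hgi, hfj, hgj, hi1, hi2⟩ := hyp
  have hfeq : f = fun x => ∑ i, fi i x * gi i 1 := by
    funext x
    have h := hi1 x 1
    rwa [mul_one, if_pos H.one_mem, mul_one] at h
  have hfc : Continuous f := by
    rw [hfeq]
    exact continuous_finset_sum _ fun i _ => (hfi i).1.mul continuous_const
  set S : Set (G ⧸ H) := (QuotientGroup.mk : G → G ⧸ H) '' Function.support f with hSdef
  have hSfin : S.Finite := by
    by_contra hinf
    have hInf : S.Infinite := hinf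
    set emb : ℕ ↪ ↥S := Set.Infinite.natEmbedding S hInf with hembdef
    set q : Fin (n+1) → G ⧸ H := fun k => (emb (k : ℕ) : G ⧸ H) with hqdef
    have hq_inj : Function.Injective q := by
      intro k l hkl
      exact Fin.val_injective (emb.injective (Subtype.coe_injective hkl))
    have hqS : ∀ k, q k ∈ S := fun k => (emb (k : ℕ)).2
    choose y hysup hymk using fun k : Fin (n+1) => hqS k
    have hne : ∀ k, f (y k) ≠ 0 := hysup
    have hd : ∀ k l : Fin (n+1), (y k)⁻¹ * (y l) ∈ H → k = l := by
      intro k l hkl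
      apply hq_inj
      rw [← hymk k, ← hymk l]
      exact QuotientGroup.eq.2 hkl
    have hnli : ¬ LinearIndependent ℂ (fun k : Fin (n+1) => (fun j : Fin n => gj j (y k))) := by
      intro hli
      have hcard := hli.fintype_card_le_finrank
      simp [Module.finrank_fin_fun] at hcard
    obtain ⟨a, hsum0, k0, hk0⟩ := Fintype.not_linearIndependent_iff.1 hnli
    have hcomp : ∀ j : Fin n, ∑ k, a k * gj j (y k) = 0 := by
      intro j
      have h := congrFun hsum0 j
      simpa using h
    have hzero : a k0 * f (y k0) = 0 := by
      calc a k0 * f (y k0)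
          = ∑ k, a k * (f (y k) * (if (y k0)⁻¹ * (y k) ∈ H then (1:ℂ) else 0)) := by
            rw [Finset.sum_eq_single k0]
            · rw [if_pos (by simpa using H.one_mem), mul_one]
            · intro k _ hkk0
              rw [if_neg (fun h => hkk0 (hd k0 k h).symm), mul_zero, mul_zero]
            · intro h; exact absurd (Finset.mem_univ k0) h
        _ = ∑ k, a k * (∑ j, fj j ((y k0)⁻¹) * gj j (y k)) :=
            Finset.sum_congr rfl (fun k _ => by rw [hi2])
        _ = ∑ j, fj j ((y k0)⁻¹) * (∑ k, a k * gj j (y k)) := by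
            simp_rw [Finset.mul_sum]
            rw [Finset.sum_comm]
            refine Finset.sum_congr rfl fun j _ => Finset.sum_congr rfl fun k _ => by ring
        _ = 0 := by simp [hcomp]
    rcases mul_eq_zero.1 hzero with h | h
    · exact hk0 h
    · exact hne k0 h
  set U : Set G := ⋃ q ∈ S, (q : G ⧸ H).out • (H : Set G) with hUdef
  have hUc : IsCompact U := hSfin.isCompact_biUnion (fun q _ => hHc.smul _)
  have hUcl : IsClosed U := hSfin.isClosed_biUnion (fun q _ => (hHc.smul _).isClosed)
  have hUo : IsOpen U := isOpen_biUnion (fun q _ => hHo.smul _)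
  have hUmem : ∀ z : G, f z ≠ 0 → z ∈ U := fun z hz =>
    Set.mem_biUnion ⟨z, hz, rfl⟩ ((mem_out_smul _ z).2 rfl)
  have hfs : HasCompactSupport f := HasCompactSupport.intro hUc
    (fun x hx => by by_contra h; exact hx (hUmem x h))
  refine ⟨hfc, hfs, H, hHc, hHo, m, (fun i x => fi i x * (if x ∈ U then (1:ℂ) else 0)),
    (fun i (k : ↥H) => gi i (k : G)), ?_, ?_, ?_⟩
  · intro i
    refine ⟨(hfi i).1.mul (indicator_cont' ⟨hUcl, hUo⟩), ?_⟩
    exact HasCompactSupport.intro hUc (fun x hx => by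
      show fi i x * (if x ∈ U then (1:ℂ) else 0) = 0
      rw [if_neg hx, mul_zero])
  · intro i; exact (hgi i).1.comp continuous_subtype_val
  · intro x k
    by_cases hx : x ∈ U
    · have h := hi1 x (k : G)
      rw [if_pos k.2, mul_one] at h
      rw [h]
      exact Finset.sum_congr rfl fun i _ => by
        show fi i x * gi i (k : G) = fi i x * (if x ∈ U then (1:ℂ) else 0) * gi i (k : G)
        rw [if_pos hx, mul_one]
    · have hfz : f (x * (k : G)) = 0 := by
        by_contra h
        apply hx
        have h2 : (QuotientGroup.mk (x * (k : G)) : G ⧸ H) = QuotientGroup.mk x :=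
          QuotientGroup.mk_mul_of_mem x k.2
        exact Set.mem_biUnion (show (QuotientGroup.mk x : G ⧸ H) ∈ S from
          h2 ▸ ⟨x * (k : G), h, rfl⟩) ((mem_out_smul _ x).2 rfl)
      rw [hfz]
      symm
      exact Finset.sum_eq_zero fun i _ => by
        show fi i x * (if x ∈ U then (1:ℂ) else 0) * gi i (k : G) = 0
        rw [if_neg hx, mul_zero, zero_mul]

open scoped Classical in
/-- Let `G` be a locally compact group and `H` a compact open subgroup. Then `f ∈ P(G)`
iff there are finitely many `fᵢ, gᵢ, f'ⱼ, g'ⱼ ∈ C₀(G)` such that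
`f(xy)·χ_H(y) = ∑ᵢ fᵢ(x)·gᵢ(y)` and `f(y)·χ_H(xy) = ∑ⱼ f'ⱼ(x)·g'ⱼ(y)` for all `x, y`. -/
theorem mem_polyFun_iff_indicator_factorizations
    {G : Type*} [Group G] [TopologicalSpace G] [IsTopologicalGroup G]
    [LocallyCompactSpace G] [T2Space G]
    (H : Subgroup G) (hHc : IsCompact (H : Set G)) (hHo : IsOpen (H : Set G))
    (f : G → ℂ) :
    f ∈ PolyFun G ↔
      ∃ (m n : ℕ) (fi gi : Fin m → G → ℂ) (fj gj : Fin n → G → ℂ),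
        (∀ i, Continuous (fi i) ∧ Tendsto (fi i) (cocompact G) (𝓝 0)) ∧
        (∀ i, Continuous (gi i) ∧ Tendsto (gi i) (cocompact G) (𝓝 0)) ∧
        (∀ j, Continuous (fj j) ∧ Tendsto (fj j) (cocompact G) (𝓝 0)) ∧
        (∀ j, Continuous (gj j) ∧ Tendsto (gj j) (cocompact G) (𝓝 0)) ∧
        (∀ x y : G,
          f (x * y) * (if y ∈ H then (1 : ℂ) else 0) = ∑ i, fi i x * gi i y) ∧
        (∀ x y : G,
          f y * (if x * y ∈ H then (1 : ℂ) else 0) = ∑ j, fj j x * gj j y) := by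
  exact ⟨fun hf => polyFun_aux_forward H hHc hHo f hf,
    fun h => polyFun_aux_rev H hHc hHo f h⟩
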